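/- Let λ be a measure on X, φ : X → ℝ a nonnegative measurable function, and λ₁ = λ.withDensity φ. Suppose ν is the action of R on λ and ν₁ is the action of R on λ₁ (i.e. ∫ f dν = ∫ R f dλ and ∫ f dν₁ = ∫ R f dλ₁ for all nonnegative measurable f). Then ν₁ = ν.withDensity (φ ∘ σ); in particular ν₁ is absolutely continuous with respect to ν with Radon–Nikodym derivative φ ∘ σ, so if λ₁ ≪ λ then λ₁R ≪ λR. -/
import Mathlib


open MeasureTheory

/-- If `λ₁ = λ.withDensity φ` and `ν, ν₁` are the actions of the transfer operator `R`
on `λ, λ₁`, then `ν₁ = ν.withDensity (φ ∘ σ)`; in particular `ν₁ ≪ ν`. -/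
theorem stmt_2 {X : Type*} [MeasurableSpace X] (σ : X → X)
    (hσ : Measurable σ) (hσsurj : Function.Surjective σ)
    (R : (X → ℝ) → (X → ℝ))
    (hadd : ∀ f g : X → ℝ, R (f + g) = R f + R g)
    (hsmul : ∀ (c : ℝ) (f : X → ℝ), R (c • f) = c • R f)
    (hmeas : ∀ f : X → ℝ, Measurable f → Measurable (R f))
    (hpos : ∀ f : X → ℝ, 0 ≤ f → 0 ≤ R f)
    (hpull : ∀ f g : X → ℝ, Measurable f → Measurable g →
      R ((f ∘ σ) * g) = f * R g)
    (lam : Measure X)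
    (φ : X → ℝ) (hφ : Measurable φ) (hφ0 : 0 ≤ φ)
    (lam₁ : Measure X)
    (hlam₁ : lam₁ = lam.withDensity fun x => ENNReal.ofReal (φ x))
    (ν ν₁ : Measure X)
    (hν : ∀ f : X → ℝ, Measurable f → 0 ≤ f →
      ∫⁻ x, ENNReal.ofReal (f x) ∂ν = ∫⁻ x, ENNReal.ofReal (R f x) ∂lam)
    (hν₁ : ∀ f : X → ℝ, Measurable f → 0 ≤ f →
      ∫⁻ x, ENNReal.ofReal (f x) ∂ν₁ = ∫⁻ x, ENNReal.ofReal (R f x) ∂lam₁) :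
    ν₁ = ν.withDensity (fun x => ENNReal.ofReal (φ (σ x))) ∧ ν₁ ≪ ν := by
  have key : ν₁ = ν.withDensity (fun x => ENNReal.ofReal (φ (σ x))) := by
    ext s hs
    set f : X → ℝ := s.indicator (fun _ => 1) with hf
    have hfm : Measurable f := measurable_const.indicator hs
    have hf0 : 0 ≤ f := fun x => Set.indicator_nonneg (fun _ _ => zero_le_one) x
    have hRf0 : 0 ≤ R f := hpos f hf0
    -- left side
    have h1 : ν₁ s = ∫⁻ x, ENNReal.ofReal (f x) ∂ν₁ := by
      have : ∀ x, ENNReal.ofReal (f x) = s.indicator (fun _ => (1 : ENNReal)) x := by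
        intro x
        simp only [hf, Set.indicator]
        split <;> simp
      rw [lintegral_congr this, lintegral_indicator hs _]
      simp
    have h2 : ∫⁻ x, ENNReal.ofReal (f x) ∂ν₁
        = ∫⁻ x, ENNReal.ofReal (φ x) * ENNReal.ofReal (R f x) ∂lam := by
      rw [hν₁ f hfm hf0, hlam₁,
        lintegral_withDensity_eq_lintegral_mul _ hφ.ennreal_ofReal
          (hmeas f hfm).ennreal_ofReal]
      rfl
    -- right side
    set g : X → ℝ := (φ ∘ σ) * f with hg
    have hgm : Measurable g := (hφ.comp hσ).mul hfm
    have hg0 : 0 ≤ g := fun x => mul_nonneg (hφ0 (σ x)) (hf0 x)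
    have h3 : (ν.withDensity (fun x => ENNReal.ofReal (φ (σ x)))) s
        = ∫⁻ x, ENNReal.ofReal (g x) ∂ν := by
      rw [withDensity_apply _ hs, ← lintegral_indicator hs _]
      apply lintegral_congr
      intro x
      simp only [hg, hf, Set.indicator, Pi.mul_apply, Function.comp_apply]
      split <;> simp
    have h4 : ∫⁻ x, ENNReal.ofReal (g x) ∂ν
        = ∫⁻ x, ENNReal.ofReal (φ x) * ENNReal.ofReal (R f x) ∂lam := by
      rw [hν g hgm hg0]
      apply lintegral_congr
      intro x
      rw [hg, hpull φ f hφ hfm]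
      simp only [Pi.mul_apply]
      rw [ENNReal.ofReal_mul (hφ0 x)]
    rw [h1, h2, h3, h4]
  refine ⟨key, ?_⟩
  rw [key]
  exact withDensity_absolutelyContinuous ν _
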